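/- Let 𝒳 and 𝒴 be n×n real symmetric matrices that commute: 𝒳·𝒴 = 𝒴·𝒳. Then d(exp(𝒳), exp(𝒴)) = ‖𝒳 − 𝒴‖_F, where exp denotes the matrix exponential. -/

import Mathlib

open Matrix

section Aux
variable {n : ℕ}

lemma herm_smul (c : ℝ) {A : Matrix (Fin n) (Fin n) ℝ} (hA : A.IsHermitian) :
    (c • A).IsHermitian := by
  simpa [Matrix.IsHermitian] using congrArg (c • ·) hA.eq

lemma cfc_exp_eq (A : Matrix (Fin n) (Fin n) ℝ) (hA : A.IsHermitian) :
    cfc Real.exp A = NormedSpace.exp A := by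
  letI : NormedRing (Matrix (Fin n) (Fin n) ℝ) := Matrix.instL2OpNormedRing
  letI : NormedAlgebra ℝ (Matrix (Fin n) (Fin n) ℝ) := Matrix.instL2OpNormedAlgebra
  exact CFC.real_exp_eq_normedSpace_exp hA

lemma trace_cfc' (A : Matrix (Fin n) (Fin n) ℝ) (hA : A.IsHermitian) (f : ℝ → ℝ) :
    (hA.cfc f).trace = ∑ i, f (hA.eigenvalues i) := by
  rw [Matrix.IsHermitian.cfc, Unitary.conjStarAlgAut_apply, Matrix.trace_mul_cycle,
    Unitary.star_mul_self_of_mem (SetLike.coe_mem _), one_mul, Matrix.trace_diagonal]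
  simp [Function.comp]

lemma exp_posSemidef (A : Matrix (Fin n) (Fin n) ℝ) (hA : A.IsHermitian) :
    (NormedSpace.exp A).PosSemidef := by
  set B := NormedSpace.exp ((1/2 : ℝ) • A) with hBdef
  have hB : B.IsHermitian := Matrix.IsHermitian.exp (herm_smul _ hA)
  have hBB : B * B = NormedSpace.exp A := by
    rw [hBdef, ← Matrix.exp_add_of_commute _ _ (Commute.refl _)]
    norm_num [← add_smul]
  have := Matrix.posSemidef_conjTranspose_mul_self B
  rwa [hB.eq, hBB] at this

lemma sum_log_sq (A : Matrix (Fin n) (Fin n) ℝ) (hA : A.IsHermitian)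
    (h : (NormedSpace.exp A).IsHermitian) :
    ∑ i, Real.log (h.eigenvalues i) ^ 2 = ∑ i, hA.eigenvalues i ^ 2 := by
  have hsa : IsSelfAdjoint A := hA
  have hg : ContinuousOn (fun x => Real.log x ^ 2) (Real.exp '' spectrum ℝ A) := by
    apply ContinuousOn.pow
    apply Real.continuousOn_log.mono
    rintro x ⟨y, -, rfl⟩
    exact (Real.exp_pos y).ne'
  have hcomp : cfc (R := ℝ) (p := (IsSelfAdjoint : Matrix (Fin n) (Fin n) ℝ → Prop)) (fun x => Real.log x ^ 2) (NormedSpace.exp A)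
      = cfc (R := ℝ) (p := (IsSelfAdjoint : Matrix (Fin n) (Fin n) ℝ → Prop)) (fun x => x ^ 2) A := by
    rw [← cfc_exp_eq A hA,
      ← cfc_comp' (R := ℝ) (p := IsSelfAdjoint) (fun x => Real.log x ^ 2) Real.exp A hg
        Real.continuous_exp.continuousOn hsa]
    exact cfc_congr fun x _ => by simp [Real.log_exp]
  calc ∑ i, Real.log (h.eigenvalues i) ^ 2
      = (h.cfc fun x => Real.log x ^ 2).trace := (trace_cfc' _ h (fun x => Real.log x ^ 2)).symm
    _ = (cfc (fun x => Real.log x ^ 2) (NormedSpace.exp A)).trace := by rw [h.cfc_eq]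
    _ = (cfc (fun x => x ^ 2) A).trace := by rw [hcomp]
    _ = (hA.cfc fun x => x ^ 2).trace := by rw [hA.cfc_eq]
    _ = ∑ i, hA.eigenvalues i ^ 2 := trace_cfc' _ hA (fun x => x ^ 2)

end Aux


open Matrix

open scoped Classical in
/-- The symmetric positive-semidefinite square root of a matrix (junk value `0` if the
matrix is not positive semidefinite). -/
noncomputable def msqrt {n : ℕ} (X : Matrix (Fin n) (Fin n) ℝ) : Matrix (Fin n) (Fin n) ℝ :=
  if h : X.PosSemidef then
    (h.1.eigenvectorUnitary : Matrix (Fin n) (Fin n) ℝ) *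
      diagonal ((RCLike.ofReal : ℝ → ℝ) ∘ Real.sqrt ∘ h.1.eigenvalues) *
      (star (h.1.eigenvectorUnitary : Matrix (Fin n) (Fin n) ℝ))
  else 0

open scoped Classical in
/-- The geodesic distance between positive-definite matrices `X` and `Y`:
`d(X,Y) = sqrt (∑ i, (log λ_i)²)` where `λ_i` are the eigenvalues of the symmetric
positive-definite matrix `X^{-1/2} Y X^{-1/2}` (junk value `0` if that matrix is
not symmetric). -/
noncomputable def geoDist {n : ℕ} (X Y : Matrix (Fin n) (Fin n) ℝ) : ℝ :=
  if h : ((msqrt X)⁻¹ * Y * (msqrt X)⁻¹).IsHermitian then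
    Real.sqrt (∑ i, Real.log (h.eigenvalues i) ^ 2)
  else 0

/-- The Frobenius norm `‖A‖_F = sqrt (tr (Aᵀ A))`. -/
noncomputable def frobNorm {n : ℕ} (A : Matrix (Fin n) (Fin n) ℝ) : ℝ :=
  Real.sqrt (Matrix.trace (Aᵀ * A))

lemma geoDist_eq {n : ℕ} (X Y M : Matrix (Fin n) (Fin n) ℝ)
    (hM : (msqrt X)⁻¹ * Y * (msqrt X)⁻¹ = M) (h : M.IsHermitian) :
    geoDist X Y = Real.sqrt (∑ i, Real.log (h.eigenvalues i) ^ 2) := by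
  subst hM
  rw [geoDist, dif_pos h]

/-- For commuting real symmetric matrices `𝒳`, `𝒴`,
`d(exp 𝒳, exp 𝒴) = ‖𝒳 − 𝒴‖_F`. -/
theorem stmt3 {n : ℕ} (𝒳 𝒴 : Matrix (Fin n) (Fin n) ℝ)
    (hX : 𝒳.IsHermitian) (hY : 𝒴.IsHermitian) (hcomm : 𝒳 * 𝒴 = 𝒴 * 𝒳) :
    geoDist (NormedSpace.exp 𝒳) (NormedSpace.exp 𝒴) = frobNorm (𝒳 - 𝒴) := by
  classical
  have hcomm' : Commute 𝒳 𝒴 := hcomm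
  set B := NormedSpace.exp ((1/2 : ℝ) • 𝒳) with hBdef
  have hBB : B * B = NormedSpace.exp 𝒳 := by
    rw [hBdef, ← Matrix.exp_add_of_commute _ _ (Commute.refl _)]
    norm_num [← add_smul]
  have hPSD := exp_posSemidef 𝒳 hX
  have hmsqrt : msqrt (NormedSpace.exp 𝒳) = B := by
    rw [msqrt, dif_pos hPSD]
    have e1 : (hPSD.1.eigenvectorUnitary : Matrix (Fin n) (Fin n) ℝ) *
        diagonal ((RCLike.ofReal : ℝ → ℝ) ∘ Real.sqrt ∘ hPSD.1.eigenvalues) *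
        (star (hPSD.1.eigenvectorUnitary : Matrix (Fin n) (Fin n) ℝ))
          = cfc Real.sqrt (NormedSpace.exp 𝒳) := by
      rw [hPSD.1.cfc_eq, Matrix.IsHermitian.cfc, Unitary.conjStarAlgAut_apply]
    have hsa : IsSelfAdjoint 𝒳 := hX
    rw [e1, ← cfc_exp_eq _ hX, ← cfc_comp' (R := ℝ) (p := IsSelfAdjoint) Real.sqrt Real.exp 𝒳
      Real.continuous_sqrt.continuousOn Real.continuous_exp.continuousOn hsa, hBdef,
      ← cfc_exp_eq _ (herm_smul _ hX),
      ← cfc_comp_smul (1/2 : ℝ) Real.exp 𝒳 Real.continuous_exp.continuousOn hsa]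
    refine cfc_congr fun x _ => ?_
    show Real.sqrt (Real.exp x) = Real.exp ((1/2 : ℝ) • x)
    rw [← Real.exp_half, smul_eq_mul]
    congr 1
    ring
  have hA : (𝒴 - 𝒳).IsHermitian := hY.sub hX
  have h1 : Commute (-((1/2 : ℝ) • 𝒳)) 𝒴 := (hcomm'.smul_left _).neg_left
  have h2 : Commute (-((1/2 : ℝ) • 𝒳) + 𝒴) (-((1/2 : ℝ) • 𝒳)) :=
    (Commute.refl _).add_left h1.symm
  have key : (msqrt (NormedSpace.exp 𝒳))⁻¹ * NormedSpace.exp 𝒴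
      * (msqrt (NormedSpace.exp 𝒳))⁻¹ = NormedSpace.exp (𝒴 - 𝒳) := by
    rw [hmsqrt, hBdef, ← Matrix.exp_neg, ← Matrix.exp_add_of_commute _ _ h1,
      ← Matrix.exp_add_of_commute _ _ h2]
    congr 1
    module
  have hH : (NormedSpace.exp (𝒴 - 𝒳)).IsHermitian := Matrix.IsHermitian.exp hA
  rw [geoDist_eq _ _ _ key hH, sum_log_sq _ hA hH, frobNorm]
  congr 1
  have ht : (𝒳 - 𝒴)ᵀ = 𝒳 - 𝒴 := by
    rw [← Matrix.conjTranspose_eq_transpose_of_trivial]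
    exact (hX.sub hY).eq
  rw [ht, ← neg_sub 𝒴 𝒳, neg_mul_neg]
  have hsa : IsSelfAdjoint (𝒴 - 𝒳) := hA
  calc ∑ i, hA.eigenvalues i ^ 2
      = (hA.cfc fun x => x ^ 2).trace := (trace_cfc' _ hA (fun x => x ^ 2)).symm
    _ = (cfc (fun x => x ^ 2) (𝒴 - 𝒳)).trace := by rw [hA.cfc_eq]
    _ = ((𝒴 - 𝒳) ^ 2).trace := by rw [cfc_pow_id (𝒴 - 𝒳) 2 hsa]
    _ = ((𝒴 - 𝒳) * (𝒴 - 𝒳)).trace := by rw [sq]
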